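/- Let r be a real random variable with P(r ≥ -1) = 1, P(r > 0) > 0, P(r < 0) > 0, and E[r²] < ∞. Then lim_{f→0+} SR_r(f) = E[r]/√(Var[r]), where SR_r(f) = g_r(f)/√(υ_r(f)), g_r(f) = E[ln(1 + f r)], and υ_r(f) = Var[ln(1 + f r)]. -/

import Mathlib

open MeasureTheory ProbabilityTheory Real Filter Topology

lemma log_one_add_ge_div {u : ℝ} (hu : -(1/2:ℝ) ≤ u) : u / (1+u) ≤ Real.log (1+u) := by
  have h1 : (0:ℝ) < 1 + u := by linarith
  have h2 : Real.log (1+u)⁻¹ ≤ (1+u)⁻¹ - 1 := Real.log_le_sub_one_of_pos (by positivity)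
  rw [Real.log_inv] at h2
  have h3 : (1+u)⁻¹ - 1 = -(u/(1+u)) := by field_simp; ring
  linarith [h3 ▸ h2]

lemma abs_log_one_add_sub_le {u : ℝ} (hu : -(1/2:ℝ) ≤ u) : |Real.log (1+u) - u| ≤ 2*u^2 := by
  have h1 : (0:ℝ) < 1 + u := by linarith
  have hle : Real.log (1+u) ≤ u := by have := Real.log_le_sub_one_of_pos h1; linarith
  have hge := log_one_add_ge_div hu
  rw [abs_sub_comm, abs_of_nonneg (by linarith)]
  have key : u - u/(1+u) = u^2/(1+u) := by field_simp; ring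
  have h4 : u^2/(1+u) ≤ 2*u^2 := by
    rw [div_le_iff₀ h1]; nlinarith [sq_nonneg u]
  linarith

lemma abs_log_one_add_le {u : ℝ} (hu : -(1/2:ℝ) ≤ u) : |Real.log (1+u)| ≤ 2*|u| := by
  have h1 : (0:ℝ) < 1 + u := by linarith
  have hle : Real.log (1+u) ≤ u := by have := Real.log_le_sub_one_of_pos h1; linarith
  have hge := log_one_add_ge_div hu
  rcases le_or_gt 0 u with h | h
  · rw [abs_of_nonneg (Real.log_nonneg (by linarith)), abs_of_nonneg h]; linarith
  · rw [abs_of_nonpos (by linarith : Real.log (1+u) ≤ 0), abs_of_neg h]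
    have : 2*u ≤ u/(1+u) := by rw [le_div_iff₀ h1]; nlinarith
    linarith


/-- if `E[r²] < ∞`, then as `f → 0+`, the asymptotic Sharpe ratio
`SR_r(f) = g_r(f)/√(υ_r(f))` tends to the classical Sharpe ratio `E[r]/√(Var[r])`. -/
theorem sharpe_ratio_limit_at_zero
    {Ω : Type*} [MeasurableSpace Ω] (P : Measure Ω) [IsProbabilityMeasure P]
    (r : Ω → ℝ) (hmeas : Measurable r)
    (h1 : ∀ᵐ ω ∂P, -1 ≤ r ω)
    (hpos : 0 < P {ω | 0 < r ω})
    (hneg : 0 < P {ω | r ω < 0})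
    (hsq : Integrable (fun ω => (r ω) ^ 2) P) :
    Tendsto
      (fun f => (∫ ω, Real.log (1 + f * r ω) ∂P)
        / Real.sqrt (variance (fun ω => Real.log (1 + f * r ω)) P))
      (𝓝[>] (0 : ℝ))
      (𝓝 ((∫ ω, r ω ∂P) / Real.sqrt (variance r P))) := by
  have hr_sm : AEStronglyMeasurable r P := hmeas.aestronglyMeasurable
  have hr2 : MemLp r 2 P := (memLp_two_iff_integrable_sq hr_sm).2 hsq
  have hrint : Integrable r P := hr2.integrable one_le_two
  -- variance of r is positive
  have hVar : 0 < variance r P := by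
    rcases (variance_nonneg r P).lt_or_eq with h | h
    · exact h
    · exfalso
      have hev : evariance r P = 0 := by
        have hlt := hr2.evariance_lt_top
        rcases (ENNReal.toReal_eq_zero_iff (evariance r P)).1 h.symm with h' | h'
        · exact h'
        · exact absurd h' hlt.ne
      have hconst : r =ᵐ[P] fun _ => ∫ ω, r ω ∂P :=
        (evariance_eq_zero_iff hmeas.aemeasurable).1 hev
      set c := ∫ ω, r ω ∂P with hc
      rcases le_or_gt c 0 with hcle | hcgt
      · have h0 : ∀ᵐ ω ∂P, ¬ (0 < r ω) := hconst.mono fun ω hω => by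
          simp only [hω]; exact not_lt.2 hcle
        have : P {ω | 0 < r ω} = 0 := by
          have := MeasureTheory.ae_iff.1 h0
          simpa using this
        exact absurd this hpos.ne'
      · have h0 : ∀ᵐ ω ∂P, ¬ (r ω < 0) := hconst.mono fun ω hω => by
          simp only [hω]; exact not_lt.2 hcgt.le
        have : P {ω | r ω < 0} = 0 := by
          have := MeasureTheory.ae_iff.1 h0
          simpa using this
        exact absurd this hneg.ne'
  -- notation
  have hIoo : Set.Ioo (0:ℝ) (1/2) ∈ 𝓝[>] (0:ℝ) := Ioo_mem_nhdsGT_of_mem (by constructor <;> norm_num)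
  -- pointwise estimates
  have hest : ∀ f ∈ Set.Ioo (0:ℝ) (1/2), ∀ ω : Ω, -1 ≤ r ω →
      |Real.log (1 + f * r ω) - f * r ω| ≤ 2*(r ω)^2*f^2 ∧
      |Real.log (1 + f * r ω)| ≤ 2*f*|r ω| := by
    intro f hf ω ha
    have hu : -(1/2:ℝ) ≤ f * r ω := by nlinarith [hf.1.le, hf.2.le]
    constructor
    · have h := abs_log_one_add_sub_le hu
      calc |Real.log (1 + f * r ω) - f * r ω| ≤ 2*(f * r ω)^2 := h
        _ = 2*(r ω)^2*f^2 := by ring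
    · have h := abs_log_one_add_le hu
      calc |Real.log (1 + f * r ω)| ≤ 2*|f * r ω| := h
        _ = 2*f*|r ω| := by rw [abs_mul, abs_of_pos hf.1]; ring
  have hGm : ∀ f : ℝ, AEStronglyMeasurable (fun ω => Real.log (1 + f * r ω) / f) P :=
    fun f => (((measurable_const.add (measurable_const.mul hmeas)).log).div_const f).aestronglyMeasurable
  -- pointwise limit
  have hptw : ∀ᵐ ω ∂P, Tendsto (fun f => Real.log (1 + f * r ω) / f) (𝓝[>] (0:ℝ)) (𝓝 (r ω)) := by
    filter_upwards [h1] with ω ha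
    rw [← tendsto_sub_nhds_zero_iff]
    apply squeeze_zero_norm' (a := fun f => 2*(r ω)^2*f)
    · filter_upwards [hIoo] with f hf
      have h := (hest f hf ω ha).1
      have hfne : f ≠ 0 := hf.1.ne'
      have e : Real.log (1 + f * r ω) / f - r ω = (Real.log (1 + f * r ω) - f * r ω) / f := by
        field_simp
      rw [Real.norm_eq_abs, e, abs_div, abs_of_pos hf.1, div_le_iff₀ hf.1]
      nlinarith [h, sq_nonneg (r ω), hf.1.le]
    · have h0 : Tendsto (fun f : ℝ => 2*(r ω)^2*f) (𝓝 0) (𝓝 0) := by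
        simpa using (continuous_mul_left (2*(r ω)^2)).tendsto (0:ℝ)
      exact h0.mono_left nhdsWithin_le_nhds
  -- first moment limit
  have A1 : Tendsto (fun f => ∫ ω, Real.log (1 + f * r ω) / f ∂P) (𝓝[>] (0:ℝ))
      (𝓝 (∫ ω, r ω ∂P)) := by
    apply tendsto_integral_filter_of_dominated_convergence (fun ω => 2*|r ω|)
      (Eventually.of_forall hGm) _ (hrint.abs.const_mul 2) hptw
    filter_upwards [hIoo] with f hf
    filter_upwards [h1] with ω ha
    have h := (hest f hf ω ha).2
    rw [Real.norm_eq_abs, abs_div, abs_of_pos hf.1, div_le_iff₀ hf.1]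
    calc |Real.log (1 + f * r ω)| ≤ 2*f*|r ω| := h
      _ = 2*|r ω| * f := by ring
  -- second moment limit
  have A2 : Tendsto (fun f => ∫ ω, (Real.log (1 + f * r ω) / f)^2 ∂P) (𝓝[>] (0:ℝ))
      (𝓝 (∫ ω, (r ω)^2 ∂P)) := by
    apply tendsto_integral_filter_of_dominated_convergence (fun ω => 4*(r ω)^2)
      (Eventually.of_forall fun f => (hGm f).pow 2) _ (hsq.const_mul 4)
      (by filter_upwards [hptw] with ω hω; exact hω.pow 2)
    filter_upwards [hIoo] with f hf
    filter_upwards [h1] with ω ha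
    have h := (hest f hf ω ha).2
    have hb : |Real.log (1 + f * r ω) / f| ≤ 2*|r ω| := by
      rw [abs_div, abs_of_pos hf.1, div_le_iff₀ hf.1]
      calc |Real.log (1 + f * r ω)| ≤ 2*f*|r ω| := h
        _ = 2*|r ω| * f := by ring
    rw [Real.norm_eq_abs, Pi.pow_apply, abs_of_nonneg (sq_nonneg _)]
    nlinarith [hb, sq_abs (Real.log (1 + f * r ω) / f), sq_abs (r ω), abs_nonneg (Real.log (1 + f * r ω) / f), abs_nonneg (r ω)]
  -- Memℒp of log process
  have hFmem : ∀ f ∈ Set.Ioo (0:ℝ) (1/2), MemLp (fun ω => Real.log (1 + f * r ω)) 2 P := by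
    intro f hf
    apply MemLp.of_le (hr2.const_mul (2*f))
      ((measurable_const.add (measurable_const.mul hmeas)).log).aestronglyMeasurable
    filter_upwards [h1] with ω ha
    have h := (hest f hf ω ha).2
    rw [Real.norm_eq_abs, Real.norm_eq_abs, abs_mul]
    calc |Real.log (1 + f * r ω)| ≤ 2*f*|r ω| := h
      _ ≤ |2*f| * |r ω| := by
        have : (2*f) ≤ |2*f| := le_abs_self _
        nlinarith [abs_nonneg (r ω)]
  -- variance formula
  have hvar_eq : ∀ f ∈ Set.Ioo (0:ℝ) (1/2),
      variance (fun ω => Real.log (1 + f * r ω)) P / f^2 =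
        (∫ ω, (Real.log (1 + f * r ω) / f)^2 ∂P) - (∫ ω, Real.log (1 + f * r ω) / f ∂P)^2 := by
    intro f hf
    rw [variance_eq_sub (hFmem f hf)]
    have e1 : ∫ ω, Real.log (1 + f * r ω) / f ∂P = (∫ ω, Real.log (1 + f * r ω) ∂P) / f :=
      integral_div f _
    have e2 : ∫ ω, (Real.log (1 + f * r ω) / f)^2 ∂P
        = (∫ ω, (Real.log (1 + f * r ω))^2 ∂P) / f^2 := by
      simp only [div_pow]
      exact integral_div (f^2) _
    rw [e1, e2]
    simp only [Pi.pow_apply]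
    ring
  -- denominator limit
  have hden : Tendsto (fun f => variance (fun ω => Real.log (1 + f * r ω)) P / f^2)
      (𝓝[>] (0:ℝ)) (𝓝 (variance r P)) := by
    have lim := A2.sub (A1.pow 2)
    have hv : variance r P = (∫ ω, (r ω)^2 ∂P) - (∫ ω, r ω ∂P)^2 := by
      rw [variance_eq_sub hr2]; simp only [Pi.pow_apply]
    rw [hv]
    apply lim.congr'
    filter_upwards [hIoo] with f hf
    exact (hvar_eq f hf).symm
  -- combine
  have hsqrtne : Real.sqrt (variance r P) ≠ 0 := (Real.sqrt_pos.2 hVar).ne'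
  have hmain : Tendsto (fun f => (∫ ω, Real.log (1 + f * r ω) / f ∂P)
      / Real.sqrt (variance (fun ω => Real.log (1 + f * r ω)) P / f^2)) (𝓝[>] (0:ℝ))
      (𝓝 ((∫ ω, r ω ∂P) / Real.sqrt (variance r P))) :=
    A1.div (hden.sqrt) hsqrtne
  apply hmain.congr'
  filter_upwards [hIoo] with f hf
  have hfpos := hf.1
  have e1 : ∫ ω, Real.log (1 + f * r ω) / f ∂P = (∫ ω, Real.log (1 + f * r ω) ∂P) / f :=
    integral_div f _
  have e2 : Real.sqrt (variance (fun ω => Real.log (1 + f * r ω)) P / f^2)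
      = Real.sqrt (variance (fun ω => Real.log (1 + f * r ω)) P) / f := by
    rw [Real.sqrt_div (variance_nonneg _ _), Real.sqrt_sq hfpos.le]
  rw [e1, e2]
  rcases eq_or_ne (Real.sqrt (variance (fun ω => Real.log (1 + f * r ω)) P)) 0 with h | h
  · simp [h]
  · field_simp
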